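/- Let G be a graph, A ⊆ V(G), and t a natural number. The number of equivalence classes of the n-neighbor equivalence relation (n = |V(G)|) restricted to subsets of A of size at most t is at most (t+1)^{r}, where r is the rank over ℚ of the bipartite adjacency matrix between A and V(G)\A. -/

import Mathlib

/-- `X` and `Y` are `d`-neighbor equivalent over `A` in `G`. -/
def nequiv {V : Type*} [Fintype V] [DecidableEq V] (G : SimpleGraph V) [DecidableRel G.Adj]
    (d : ℕ) (A X Y : Finset V) : Prop :=
  ∀ u ∉ A, min d (G.neighborFinset u ∩ X).card = min d (G.neighborFinset u ∩ Y).card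

/-- The `n`-neighbor equivalence relation (`n = |V(G)|`) on subsets of `A` of size ≤ t. -/
def necSetoidLe {V : Type*} [Fintype V] [DecidableEq V] (G : SimpleGraph V)
    [DecidableRel G.Adj] (A : Finset V) (t : ℕ) :
    Setoid {X : Finset V // X ⊆ A ∧ X.card ≤ t} where
  r X Y := nequiv G (Fintype.card V) A X.1 Y.1
  iseqv := ⟨fun _ _ _ => rfl, fun h u hu => (h u hu).symm,
    fun h1 h2 u hu => (h1 u hu).trans (h2 u hu)⟩

/-- The bipartite adjacency matrix between `A` and its complement, over a ring `F`. -/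
def bipAdj {V : Type*} [Fintype V] [DecidableEq V] (G : SimpleGraph V) [DecidableRel G.Adj]
    (A : Finset V) (F : Type*) [Zero F] [One F] :
    Matrix {x // x ∈ A} {y // y ∈ Aᶜ} F :=
  Matrix.of fun a b => if G.Adj a.1 b.1 then 1 else 0

open Finset Submodule Module Matrix

/-- The indicator vector of `X` on `A`. -/
private def indVec {V : Type*} [Fintype V] [DecidableEq V] (A X : Finset V) :
    {x // x ∈ A} → ℚ := fun a => if a.1 ∈ X then 1 else 0

private theorem row_dot {V : Type*} [Fintype V] [DecidableEq V]
    (G : SimpleGraph V) [DecidableRel G.Adj] (A X : Finset V) (hX : X ⊆ A)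
    (u : {y // y ∈ Aᶜ}) :
    dotProduct ((bipAdj G A ℚ)ᵀ u) (indVec A X)
      = ((G.neighborFinset u.1 ∩ X).card : ℚ) := by
  classical
  have : ∀ a : {x // x ∈ A},
      (bipAdj G A ℚ)ᵀ u a * indVec A X a
        = if G.Adj a.1 u.1 ∧ a.1 ∈ X then (1 : ℚ) else 0 := by
    intro a
    simp only [bipAdj, indVec, Matrix.transpose_apply, Matrix.of_apply]
    by_cases h1 : G.Adj a.1 u.1 <;> by_cases h2 : a.1 ∈ X <;> simp [h1, h2]
  rw [dotProduct]
  simp only [this]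
  rw [Finset.sum_coe_sort A (fun a => if G.Adj a u.1 ∧ a ∈ X then (1 : ℚ) else 0),
    Finset.sum_boole]
  congr 2
  ext a
  simp only [Finset.mem_filter, Finset.mem_inter, SimpleGraph.mem_neighborFinset]
  constructor
  · rintro ⟨-, h1, h2⟩; exact ⟨h1.symm, h2⟩
  · rintro ⟨h1, h2⟩; exact ⟨hX h2, h1.symm, h2⟩

/-- The number of `n`-neighbor equivalence classes among subsets of `A` of size at most `t`
is at most `(t+1)^r`, where `r` is the rank over `ℚ` of `M_{A,Ā}`. -/
theorem necLe_le_pow_rankQ {V : Type*} [Fintype V] [DecidableEq V]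
    (G : SimpleGraph V) [DecidableRel G.Adj] (A : Finset V) (t : ℕ) :
    Nat.card (Quotient (necSetoidLe G A t)) ≤ (t + 1) ^ (bipAdj G A ℚ).rank := by
  classical
  set M := bipAdj G A ℚ with hM
  set N := Mᵀ with hN
  -- a spanning linearly independent subset of the rows of `N`
  obtain ⟨b, hbt, hspan, hli⟩ := exists_linearIndependent ℚ (Set.range N)
  have hbfin : b.Finite := (Set.finite_range N).subset hbt
  haveI : Fintype b := hbfin.fintype
  -- the cardinality of `b` is the rank of `M`
  have hcardb : Fintype.card b = M.rank := by
    have h1 : finrank ℚ (span ℚ b) = b.toFinset.card := finrank_span_set_eq_card hli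
    rw [← Set.toFinset_card, ← h1, hspan, M.rank_eq_finrank_span_cols]
    rfl
  -- choice of a row index for each element of `b`
  have hrep : ∀ v : b, ∃ u : {y // y ∈ Aᶜ}, N u = v.1 := fun v => hbt v.2
  choose g hg using hrep
  -- the min in `nequiv` is trivial
  have hmin : ∀ (u : V) (X : Finset V),
      min (Fintype.card V) (G.neighborFinset u ∩ X).card
        = (G.neighborFinset u ∩ X).card := by
    intro u X
    exact min_eq_right ((Finset.card_le_univ _).trans_eq (Finset.card_univ))
  -- the counting map
  set f0 : {X : Finset V // X ⊆ A ∧ X.card ≤ t} → (b → Fin (t + 1)) :=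
    fun X v => ⟨(G.neighborFinset (g v).1 ∩ X.1).card,
      Nat.lt_succ_of_le ((Finset.card_le_card Finset.inter_subset_right).trans X.2.2)⟩
    with hf0
  have hresp : ∀ X Y, (necSetoidLe G A t).r X Y → f0 X = f0 Y := by
    intro X Y h
    funext v
    have := h (g v).1 (Finset.mem_compl.mp (g v).2)
    rw [hmin, hmin] at this
    exact Fin.ext this
  set Φ : Quotient (necSetoidLe G A t) → (b → Fin (t + 1)) := Quotient.lift f0 hresp with hΦ
  have hinj : Function.Injective Φ := by
    intro q q'
    induction q using Quotient.ind
    induction q' using Quotient.ind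
    rename_i X Y
    intro h
    have hfXY : f0 X = f0 Y := h
    apply Quotient.sound
    intro u hu
    rw [hmin, hmin]
    -- linear algebra argument
    have huc : u ∈ Aᶜ := Finset.mem_compl.2 hu
    set c : {x // x ∈ A} → ℚ := fun a => indVec A X.1 a - indVec A Y.1 a with hc
    set φ : ({x // x ∈ A} → ℚ) →ₗ[ℚ] ℚ :=
      { toFun := fun w => dotProduct w c
        map_add' := fun w₁ w₂ => add_dotProduct w₁ w₂ c
        map_smul' := fun r w => smul_dotProduct r w c } with hφ
    have hker : b ⊆ LinearMap.ker φ := by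
      intro v hv
      have hval := congrFun hfXY ⟨v, hv⟩
      have hval' : ((G.neighborFinset (g ⟨v, hv⟩).1 ∩ X.1).card : ℚ)
          = ((G.neighborFinset (g ⟨v, hv⟩).1 ∩ Y.1).card : ℚ) := by
        have h2 := congrArg Fin.val hval
        simp only [hf0] at h2
        exact_mod_cast h2
      have := hg ⟨v, hv⟩
      simp only [SetLike.mem_coe, LinearMap.mem_ker, hφ, LinearMap.coe_mk, AddHom.coe_mk]
      rw [hc]
      have : dotProduct v c
          = dotProduct (N (g ⟨v, hv⟩)) (indVec A X.1)
            - dotProduct (N (g ⟨v, hv⟩)) (indVec A Y.1) := by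
        rw [hg ⟨v, hv⟩]
        simp [hc, dotProduct, Finset.sum_sub_distrib, mul_sub]
      rw [this, hN, row_dot G A X.1 X.2.1, row_dot G A Y.1 Y.2.1, hval']
      ring
    have hrow : N ⟨u, huc⟩ ∈ span ℚ b := by
      rw [hspan]
      exact subset_span (Set.mem_range_self _)
    have hker' : span ℚ b ≤ LinearMap.ker φ := span_le.2 hker
    have h0 : φ (N ⟨u, huc⟩) = 0 := hker' hrow
    have : dotProduct (N ⟨u, huc⟩) (indVec A X.1)
        = dotProduct (N ⟨u, huc⟩) (indVec A Y.1) := by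
      have hφv : dotProduct (N ⟨u, huc⟩) c = 0 := h0
      have hexp : dotProduct (N ⟨u, huc⟩) c
          = dotProduct (N ⟨u, huc⟩) (indVec A X.1)
            - dotProduct (N ⟨u, huc⟩) (indVec A Y.1) := by
        simp [hc, dotProduct, Finset.sum_sub_distrib, mul_sub]
      rw [hexp] at hφv
      linarith
    rw [hN, row_dot G A X.1 X.2.1, row_dot G A Y.1 Y.2.1] at this
    exact_mod_cast this
  calc Nat.card (Quotient (necSetoidLe G A t))
      ≤ Nat.card (b → Fin (t + 1)) := Nat.card_le_card_of_injective Φ hinj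
    _ = (t + 1) ^ M.rank := by
        rw [Nat.card_eq_fintype_card, Fintype.card_fun, Fintype.card_fin, hcardb]
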